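/- Let W, N, E, S be real random variables satisfying W + N = S + E, with N independent of E and W independent of S. Then Var(W + N) = Var(W) - Var(N) + 2·Cov(S, N) and Var(W + N) = Var(S) - Var(E) + 2·Cov(E, W). -/

import Mathlib

open MeasureTheory ProbabilityTheory

/-- Covariance of two real random variables. -/
noncomputable def cov {Ω : Type*} [MeasurableSpace Ω] (μ : Measure Ω) (X Y : Ω → ℝ) : ℝ :=
  (∫ x, X x * Y x ∂μ) - (∫ x, X x ∂μ) * (∫ x, Y x ∂μ)

private lemma memLp_two_integrable_mul {Ω : Type*} [MeasurableSpace Ω] {μ : Measure Ω}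
    {f g : Ω → ℝ} (hf : MemLp f 2 μ) (hg : MemLp g 2 μ) :
    Integrable (fun x => f x * g x) μ := by
  have h : (fun x => f x * g x)
      = fun x => ((f x + g x) ^ 2 - f x ^ 2 - g x ^ 2) / 2 := by
    funext x; ring
  rw [h]
  exact (((hf.add hg).integrable_sq.sub hf.integrable_sq).sub hg.integrable_sq).div_const 2

/-- Abstract cocycle variance identity for the increments along the four sides
of a rectangle in the stationary discrete Hammersley model. -/
theorem stmt13 {Ω : Type*} [MeasurableSpace Ω] (μ : Measure Ω) [IsProbabilityMeasure μ]
    (W N E S : Ω → ℝ)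
    (hW : MemLp W 2 μ) (hN : MemLp N 2 μ) (hE : MemLp E 2 μ) (hS : MemLp S 2 μ)
    (hcocycle : ∀ x, W x + N x = S x + E x)
    (hNE : IndepFun N E μ) (hWS : IndepFun W S μ) :
    variance (fun x => W x + N x) μ = variance W μ - variance N μ + 2 * cov μ S N ∧
    variance (fun x => W x + N x) μ = variance S μ - variance E μ + 2 * cov μ E W := by
  have iW : Integrable W μ := hW.integrable one_le_two
  have iN : Integrable N μ := hN.integrable one_le_two
  have iE : Integrable E μ := hE.integrable one_le_two
  have iS : Integrable S μ := hS.integrable one_le_two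
  -- product integrabilities
  have iWW := memLp_two_integrable_mul hW hW
  have iNN := memLp_two_integrable_mul hN hN
  have iEE := memLp_two_integrable_mul hE hE
  have iSS := memLp_two_integrable_mul hS hS
  have iWN := memLp_two_integrable_mul hW hN
  have iSN := memLp_two_integrable_mul hS hN
  have iEN := memLp_two_integrable_mul hE hN
  have iSE := memLp_two_integrable_mul hS hE
  have iWE := memLp_two_integrable_mul hW hE
  have iSW := memLp_two_integrable_mul hS hW
  -- independence relations
  have hNEint : (∫ x, N x * E x ∂μ) = (∫ x, N x ∂μ) * (∫ x, E x ∂μ) :=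
    hNE.integral_fun_mul_eq_mul_integral iN.1 iE.1
  have hWSint : (∫ x, W x * S x ∂μ) = (∫ x, W x ∂μ) * (∫ x, S x ∂μ) :=
    hWS.integral_fun_mul_eq_mul_integral iW.1 iS.1
  -- linear relation on means
  have hsum : (∫ x, W x ∂μ) + (∫ x, N x ∂μ) = (∫ x, S x ∂μ) + (∫ x, E x ∂μ) := by
    rw [← integral_add iW iN, ← integral_add iS iE]
    exact integral_congr_ae (Filter.Eventually.of_forall fun x => hcocycle x)
  -- relation multiplied by N
  have hrelN : (∫ x, W x * N x ∂μ) + (∫ x, N x * N x ∂μ)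
      = (∫ x, S x * N x ∂μ) + (∫ x, E x * N x ∂μ) := by
    rw [← integral_add iWN iNN, ← integral_add iSN iEN]
    refine integral_congr_ae (Filter.Eventually.of_forall fun x => ?_)
    linear_combination (N x) * hcocycle x
  -- relation multiplied by E
  have hrelE : (∫ x, W x * E x ∂μ) + (∫ x, N x * E x ∂μ)
      = (∫ x, S x * E x ∂μ) + (∫ x, E x * E x ∂μ) := by
    have iNE' := memLp_two_integrable_mul hN hE
    rw [← integral_add iWE iNE', ← integral_add iSE iEE]
    refine integral_congr_ae (Filter.Eventually.of_forall fun x => ?_)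
    linear_combination (E x) * hcocycle x
  -- commutativity adjustments
  have cNE : (∫ x, N x * E x ∂μ) = ∫ x, E x * N x ∂μ := by
    simp_rw [mul_comm]
  have cWS : (∫ x, W x * S x ∂μ) = ∫ x, S x * W x ∂μ := by
    simp_rw [mul_comm]
  have cWE : (∫ x, W x * E x ∂μ) = ∫ x, E x * W x ∂μ := by
    simp_rw [mul_comm]
  -- variances
  have vdef : ∀ (f : Ω → ℝ), MemLp f 2 μ →
      variance f μ = (∫ x, f x * f x ∂μ) - (∫ x, f x ∂μ) ^ 2 := by
    intro f hf
    rw [variance_eq_sub hf]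
    congr 1
    refine integral_congr_ae (Filter.Eventually.of_forall fun x => ?_)
    simp [sq]
  have vW := vdef W hW
  have vN := vdef N hN
  have vE := vdef E hE
  have vS := vdef S hS
  have vWN := vdef (fun x => W x + N x) (hW.add hN)
  -- expand variance of the sum
  have expand1 : (∫ x, (W x + N x) * (W x + N x) ∂μ)
      = (∫ x, W x * W x ∂μ) + 2 * (∫ x, W x * N x ∂μ) + (∫ x, N x * N x ∂μ) := by
    have h1 : ∀ x, (W x + N x) * (W x + N x)
        = (W x * W x + W x * N x) + (W x * N x + N x * N x) := fun x => by ring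
    have A : Integrable (fun x => W x * W x + W x * N x) μ := iWW.add iWN
    have B : Integrable (fun x => W x * N x + N x * N x) μ := iWN.add iNN
    calc (∫ x, (W x + N x) * (W x + N x) ∂μ)
        = ∫ x, (W x * W x + W x * N x) + (W x * N x + N x * N x) ∂μ := by
          exact integral_congr_ae (Filter.Eventually.of_forall fun x => h1 x)
      _ = (∫ x, W x * W x + W x * N x ∂μ) + ∫ x, W x * N x + N x * N x ∂μ :=
          integral_add A B
      _ = _ := by rw [integral_add iWW iWN, integral_add iWN iNN]; ring
  have expand2 : (∫ x, (W x + N x) * (W x + N x) ∂μ)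
      = (∫ x, S x * S x ∂μ) + 2 * (∫ x, S x * E x ∂μ) + (∫ x, E x * E x ∂μ) := by
    have h1 : ∀ x, (W x + N x) * (W x + N x)
        = (S x * S x + S x * E x) + (S x * E x + E x * E x) := fun x => by
      linear_combination (W x + N x + S x + E x) * hcocycle x
    have A : Integrable (fun x => S x * S x + S x * E x) μ := iSS.add iSE
    have B : Integrable (fun x => S x * E x + E x * E x) μ := iSE.add iEE
    calc (∫ x, (W x + N x) * (W x + N x) ∂μ)
        = ∫ x, (S x * S x + S x * E x) + (S x * E x + E x * E x) ∂μ :=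
          integral_congr_ae (Filter.Eventually.of_forall fun x => h1 x)
      _ = (∫ x, S x * S x + S x * E x ∂μ) + ∫ x, S x * E x + E x * E x ∂μ :=
          integral_add A B
      _ = _ := by rw [integral_add iSS iSE, integral_add iSE iEE]; ring
  have msum : (∫ x, W x + N x ∂μ) = (∫ x, W x ∂μ) + (∫ x, N x ∂μ) := integral_add iW iN
  constructor
  · rw [vWN, expand1, msum, vW, vN]
    unfold cov
    linear_combination (2 : ℝ) * hrelN - 2 * cNE + 2 * hNEint
      - (2 * (∫ x, N x ∂μ)) * hsum
  · rw [vWN, expand2, msum, vS, vE]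
    unfold cov
    linear_combination (-2 : ℝ) * hrelE + 2 * cWE + 2 * hNEint
      + (-(∫ x, W x ∂μ) - (∫ x, N x ∂μ) - (∫ x, S x ∂μ) + (∫ x, E x ∂μ)) * hsum
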